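/- Let λ₁ > 0, λ₂ ≥ 0, μ > 0. Then the ratio t ↦ φ^C(t)/φ^W(t) is monotone increasing on (0, ∞); that is, τ^C ≥_lr τ^W, where τ^C and τ^W are the lifetimes of the Markovian cold and warm standby systems with the same principal-unit failure rate λ₁ and repair rate μ, the warm system's spare having failure rate λ₂. -/

import Mathlib

/-- `a = sqrt((λ₂ + μ)² + 4 λ₁ μ)` for the warm standby system. -/
noncomputable def aW (l1 l2 m : ℝ) : ℝ := Real.sqrt ((l2 + m) ^ 2 + 4 * l1 * m)

/-- Density of the lifetime of the Markovian two-unit warm standby system. -/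
noncomputable def phiW (l1 l2 m t : ℝ) : ℝ :=
  Real.exp (-((2 * l1 + l2 + m) * t / 2)) * (2 * l1 * (l1 + l2) / aW l1 l2 m) *
    Real.sinh (aW l1 l2 m * t / 2)

/-- `b = sqrt(μ² + 4 λ μ)` for the cold standby system. -/
noncomputable def bC (l m : ℝ) : ℝ := Real.sqrt (m ^ 2 + 4 * l * m)

/-- Density of the lifetime of the Markovian two-unit cold standby system. -/
noncomputable def phiC (l m t : ℝ) : ℝ :=
  Real.exp (-((2 * l + m) * t / 2)) * (2 * l ^ 2 / bC l m) * Real.sinh (bC l m * t / 2)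

/-- Grönwall-type nonnegativity lemma. -/
lemma aux_nonneg (f : ℝ → ℝ) (k : ℝ) (hf : Differentiable ℝ f) (h0 : f 0 = 0)
    (h : ∀ t, 0 ≤ t → 0 ≤ deriv f t + k * f t) : ∀ t, 0 ≤ t → 0 ≤ f t := by
  intro t ht
  set g : ℝ → ℝ := fun x => Real.exp (k * x) * f x with hg
  have hgd : ∀ x : ℝ, HasDerivAt g (Real.exp (k * x) * k * f x + Real.exp (k * x) * deriv f x) x := by
    intro x
    have := (((hasDerivAt_id x).const_mul k).exp).mul (hf x).hasDerivAt
    exact this.congr_deriv (by simp only [id_eq, mul_one])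
  have hmono : MonotoneOn g (Set.Ici (0 : ℝ)) := by
    apply monotoneOn_of_deriv_nonneg (convex_Ici 0)
    · exact fun x _ => ((hgd x).continuousAt).continuousWithinAt
    · exact fun x _ => ((hgd x).differentiableAt).differentiableWithinAt
    · intro x hx
      rw [interior_Ici] at hx
      rw [(hgd x).deriv]
      have h' := h x (le_of_lt hx)
      have he := Real.exp_pos (k * x)
      nlinarith [mul_nonneg he.le h']
  have h0' : g 0 = 0 := by simp [hg, h0]
  have hgt : 0 ≤ g t := by
    have := hmono (Set.self_mem_Ici) (Set.mem_Ici.mpr ht) ht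
    rwa [h0'] at this
  exact nonneg_of_mul_nonneg_right hgt (Real.exp_pos (k * t))

/-- The Wronskian-type quantity. -/
noncomputable def Fq (P Q R S t : ℝ) : ℝ :=
  (P - R) * Real.exp ((P + R) * t) + (Q - S) * Real.exp ((Q + S) * t)
    - (P - S) * Real.exp ((P + S) * t) - (Q - R) * Real.exp ((Q + R) * t)

lemma hasDerivAt_Fq (P Q R S t : ℝ) :
    HasDerivAt (Fq P Q R S)
      ((P - R) * ((P + R) * Real.exp ((P + R) * t)) + (Q - S) * ((Q + S) * Real.exp ((Q + S) * t))
        - (P - S) * ((P + S) * Real.exp ((P + S) * t))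
        - (Q - R) * ((Q + R) * Real.exp ((Q + R) * t))) t := by
  have h : ∀ c : ℝ, HasDerivAt (fun x : ℝ => Real.exp (c * x)) (c * Real.exp (c * t)) t := by
    intro c
    simpa [mul_comm] using ((hasDerivAt_id t).const_mul c).exp
  exact ((((h (P + R)).const_mul (P - R)).add ((h (Q + S)).const_mul (Q - S))).sub
    ((h (P + S)).const_mul (P - S))).sub ((h (Q + R)).const_mul (Q - R))

lemma Fq_nonneg (P Q R S k : ℝ) (hRS : S ≤ R)
    (h1 : 0 ≤ (P - R) * (P + R + k)) (h13 : (P - R) * (P + R + k) = (P - S) * (P + S + k))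
    (h2 : (Q - R) * (Q + R + k) ≤ 0) (h24 : (Q - S) * (Q + S + k) = (Q - R) * (Q + R + k)) :
    ∀ t, 0 ≤ t → 0 ≤ Fq P Q R S t := by
  apply aux_nonneg _ k
  · exact fun x => (hasDerivAt_Fq P Q R S x).differentiableAt
  · simp [Fq]; ring
  · intro t ht
    rw [(hasDerivAt_Fq P Q R S t).deriv]
    have e13 : Real.exp ((P + S) * t) ≤ Real.exp ((P + R) * t) := by
      apply Real.exp_le_exp.mpr; nlinarith
    have e24 : Real.exp ((Q + S) * t) ≤ Real.exp ((Q + R) * t) := by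
      apply Real.exp_le_exp.mpr; nlinarith
    have key : (P - R) * ((P + R) * Real.exp ((P + R) * t))
        + (Q - S) * ((Q + S) * Real.exp ((Q + S) * t))
        - (P - S) * ((P + S) * Real.exp ((P + S) * t))
        - (Q - R) * ((Q + R) * Real.exp ((Q + R) * t)) + k * Fq P Q R S t
        = (P - R) * (P + R + k) * (Real.exp ((P + R) * t) - Real.exp ((P + S) * t))
          + ((Q - R) * (Q + R + k)) * (Real.exp ((Q + S) * t) - Real.exp ((Q + R) * t)) := by
      simp only [Fq]
      linear_combination (Real.exp ((P + S) * t)) * h13 + (Real.exp ((Q + S) * t)) * h24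
    have t1 : 0 ≤ (P - R) * (P + R + k) * (Real.exp ((P + R) * t) - Real.exp ((P + S) * t)) :=
      mul_nonneg h1 (by linarith)
    have t2 : 0 ≤ (Q - R) * (Q + R + k) * (Real.exp ((Q + S) * t) - Real.exp ((Q + R) * t)) := by
      nlinarith [mul_nonneg (neg_nonneg.2 h2) (sub_nonneg.2 e24)]
    linarith [t1, t2, key.ge, key.le]
/-- Ratio of two differences of exponentials is monotone when the Wronskian is nonnegative. -/
lemma ratio_mono (P Q R S : ℝ) (hRS : S < R)
    (hF : ∀ t, 0 ≤ t → 0 ≤ Fq P Q R S t) :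
    MonotoneOn (fun t : ℝ =>
      (Real.exp (P * t) - Real.exp (Q * t)) / (Real.exp (R * t) - Real.exp (S * t)))
      (Set.Ioi (0 : ℝ)) := by
  have hD : ∀ t : ℝ, 0 < t → 0 < Real.exp (R * t) - Real.exp (S * t) := by
    intro t ht
    have : Real.exp (S * t) < Real.exp (R * t) := by
      apply Real.exp_lt_exp.mpr; nlinarith
    linarith
  have hexp : ∀ c : ℝ, ∀ t : ℝ, HasDerivAt (fun x : ℝ => Real.exp (c * x)) (c * Real.exp (c * t)) t := by
    intro c t
    simpa [mul_comm] using ((hasDerivAt_id t).const_mul c).exp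
  have hNd : ∀ t : ℝ, HasDerivAt (fun x => Real.exp (P * x) - Real.exp (Q * x))
      (P * Real.exp (P * t) - Q * Real.exp (Q * t)) t := fun t => (hexp P t).sub (hexp Q t)
  have hDd : ∀ t : ℝ, HasDerivAt (fun x => Real.exp (R * x) - Real.exp (S * x))
      (R * Real.exp (R * t) - S * Real.exp (S * t)) t := fun t => (hexp R t).sub (hexp S t)
  have hderiv : ∀ t : ℝ, 0 < t → HasDerivAt (fun x : ℝ =>
      (Real.exp (P * x) - Real.exp (Q * x)) / (Real.exp (R * x) - Real.exp (S * x)))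
      (((P * Real.exp (P * t) - Q * Real.exp (Q * t)) * (Real.exp (R * t) - Real.exp (S * t))
        - (Real.exp (P * t) - Real.exp (Q * t)) * (R * Real.exp (R * t) - S * Real.exp (S * t)))
        / (Real.exp (R * t) - Real.exp (S * t)) ^ 2) t := by
    intro t ht
    exact (hNd t).div (hDd t) (ne_of_gt (hD t ht))
  apply monotoneOn_of_deriv_nonneg (convex_Ioi 0)
  · intro x hx
    exact ((hderiv x hx).continuousAt).continuousWithinAt
  · intro x hx
    rw [interior_Ioi] at hx
    exact ((hderiv x hx).differentiableAt).differentiableWithinAt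
  · intro x hx
    rw [interior_Ioi] at hx
    rw [(hderiv x hx).deriv]
    apply div_nonneg _ (sq_nonneg _)
    have hFx := hF x (le_of_lt hx)
    have key : (P * Real.exp (P * x) - Q * Real.exp (Q * x)) * (Real.exp (R * x) - Real.exp (S * x))
        - (Real.exp (P * x) - Real.exp (Q * x)) * (R * Real.exp (R * x) - S * Real.exp (S * x))
        = Fq P Q R S x := by
      simp only [Fq, add_mul, Real.exp_add]; ring
    rw [key]; exact hFx

lemma main_aux (l1 l2 m a b : ℝ) (h1 : 0 < l1) (h2 : 0 ≤ l2) (hm : 0 < m)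
    (hapos : 0 < a) (hbpos : 0 < b)
    (ha2 : a ^ 2 = (l2 + m) ^ 2 + 4 * l1 * m) (hb2 : b ^ 2 = m ^ 2 + 4 * l1 * m) :
    MonotoneOn (fun t : ℝ =>
      (Real.exp (-((2 * l1 + m) * t / 2)) * (2 * l1 ^ 2 / b) * Real.sinh (b * t / 2)) /
      (Real.exp (-((2 * l1 + l2 + m) * t / 2)) * (2 * l1 * (l1 + l2) / a) * Real.sinh (a * t / 2)))
      (Set.Ioi (0 : ℝ)) := by
  have hbm : m ≤ b := by nlinarith
  have hba : b ≤ a := by nlinarith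
  set A := 2 * l1 + l2 + m with hA
  set B := 2 * l1 + m with hB
  set P := (b - B) / 2 with hP
  set Q := (-b - B) / 2 with hQ
  set R := (a - A) / 2 with hR
  set S := (-a - A) / 2 with hS
  have hRS : S < R := by rw [hR, hS]; linarith
  have hF : ∀ t, 0 ≤ t → 0 ≤ Fq P Q R S t := by
    apply Fq_nonneg P Q R S A hRS.le
    · rw [hP, hR, hA, hB]
      nlinarith [mul_nonneg h2 (sub_nonneg.2 hbm)]
    · rw [hP, hR, hS, hA, hB]; ring
    · rw [hQ, hR, hA, hB]
      nlinarith [mul_nonneg h2 (by linarith : (0:ℝ) ≤ b + m)]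
    · rw [hQ, hR, hS, hA, hB]; ring
  have hmono := ratio_mono P Q R S hRS hF
  set K := (l1 ^ 2 / b) / (l1 * (l1 + l2) / a) with hK
  have hK0 : 0 ≤ K := by
    rw [hK]; positivity
  intro x hx y hy hxy
  have heq : ∀ t : ℝ,
      (Real.exp (-((2 * l1 + m) * t / 2)) * (2 * l1 ^ 2 / b) * Real.sinh (b * t / 2)) /
      (Real.exp (-((2 * l1 + l2 + m) * t / 2)) * (2 * l1 * (l1 + l2) / a) * Real.sinh (a * t / 2))
      = K * ((Real.exp (P * t) - Real.exp (Q * t)) / (Real.exp (R * t) - Real.exp (S * t))) := by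
    intro t
    have hC : Real.exp (-((2 * l1 + m) * t / 2)) * (2 * l1 ^ 2 / b) * Real.sinh (b * t / 2)
        = (l1 ^ 2 / b) * (Real.exp (P * t) - Real.exp (Q * t)) := by
      rw [Real.sinh_eq, hP, hQ, hB,
        show (b - (2 * l1 + m)) / 2 * t = b * t / 2 + -((2 * l1 + m) * t / 2) by ring,
        show (-b - (2 * l1 + m)) / 2 * t = -(b * t / 2) + -((2 * l1 + m) * t / 2) by ring,
        Real.exp_add, Real.exp_add]
      ring
    have hW : Real.exp (-((2 * l1 + l2 + m) * t / 2)) * (2 * l1 * (l1 + l2) / a) *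
          Real.sinh (a * t / 2)
        = (l1 * (l1 + l2) / a) * (Real.exp (R * t) - Real.exp (S * t)) := by
      rw [Real.sinh_eq, hR, hS, hA,
        show (a - (2 * l1 + l2 + m)) / 2 * t = a * t / 2 + -((2 * l1 + l2 + m) * t / 2) by ring,
        show (-a - (2 * l1 + l2 + m)) / 2 * t = -(a * t / 2) + -((2 * l1 + l2 + m) * t / 2) by ring,
        Real.exp_add, Real.exp_add]
      ring
    rw [hC, hW, hK, div_mul_div_comm]
  simp only [heq]
  exact (heq x).le.trans ((mul_le_mul_of_nonneg_left (hmono hx hy hxy) hK0).trans (heq y).ge)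

theorem cold_lr_warm (l1 l2 m : ℝ) (h1 : 0 < l1) (h2 : 0 ≤ l2) (hm : 0 < m) :
    MonotoneOn (fun t : ℝ => phiC l1 m t / phiW l1 l2 m t) (Set.Ioi (0 : ℝ)) := by
  have hapos : 0 < aW l1 l2 m := Real.sqrt_pos.mpr (by positivity)
  have hbpos : 0 < bC l1 m := Real.sqrt_pos.mpr (by positivity)
  have ha2 : (aW l1 l2 m) ^ 2 = (l2 + m) ^ 2 + 4 * l1 * m := Real.sq_sqrt (by positivity)
  have hb2 : (bC l1 m) ^ 2 = m ^ 2 + 4 * l1 * m := Real.sq_sqrt (by positivity)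
  have := main_aux l1 l2 m (aW l1 l2 m) (bC l1 m) h1 h2 hm hapos hbpos ha2 hb2
  simpa only [phiC, phiW] using this
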